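/- Let Λ be a finite simple graph with vertices v_1, …, v_n and n ≥ 3, and let Γ(Λ) be the graph of the explicit construction. If v_i and v_j are distinct vertices of Λ that are not adjacent in Λ, then the pair (v_i, v_j) is a separating intersection of links (SIL-pair) in Γ(Λ); in fact, {a_1, a_2} is the vertex set of a connected component of Γ(Λ) − (lk(v_i) ∩ lk(v_j)) containing neither v_i nor v_j. -/

import Mathlib

open SimpleGraph
open scoped commutatorElement

/-- The set of commutator relations defining the right-angled Artin group of a graph. -/
def raagRels {V : Type} (G : SimpleGraph V) : Set (FreeGroup V) :=
  {r | ∃ v w : V, G.Adj v w ∧ r = ⁅FreeGroup.of v, FreeGroup.of w⁆}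

/-- The right-angled Artin group of a graph `G`. -/
abbrev RAAG {V : Type} (G : SimpleGraph V) : Type := PresentedGroup (raagRels G)

/-- The subgroup of inner automorphisms of a group. -/
def Inn (G : Type*) [Group G] : Subgroup (MulAut G) := (MulAut.conj (G := G)).range

instance Inn.normal (G : Type*) [Group G] : (Inn G).Normal := by
  constructor
  intro x hx φ
  obtain ⟨g, rfl⟩ := hx
  refine ⟨φ g, ?_⟩
  ext h
  simp [MulAut.conj, mul_assoc]

/-- The outer automorphism group of a group. -/
abbrev Out (G : Type*) [Group G] : Type _ := MulAut G ⧸ Inn G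

/-- The group of pure symmetric automorphisms of the right-angled Artin group of `G`:
those automorphisms sending each generator to a conjugate of itself. -/
def PSA {V : Type} (G : SimpleGraph V) : Subgroup (MulAut (RAAG G)) where
  carrier := {φ | ∀ v : V,
    IsConj (PresentedGroup.of (rels := raagRels G) v) (φ (PresentedGroup.of v))}
  one_mem' := fun _ => IsConj.refl _
  mul_mem' := by
    intro φ ψ hφ hψ v
    rw [MulAut.mul_apply]
    exact (hφ v).trans (φ.toMonoidHom.map_isConj (hψ v))
  inv_mem' := by
    intro φ hφ v
    have h := (φ⁻¹ : MulAut (RAAG G)).toMonoidHom.map_isConj (hφ v)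
    simp only [MulEquiv.coe_toMonoidHom] at h
    have h2 : (φ⁻¹ : MulAut (RAAG G)) (φ (PresentedGroup.of v)) = PresentedGroup.of v := by
      simp
    rw [h2] at h
    exact h.symm

/-- The group of pure symmetric outer automorphisms: the image of `PSA` in `Out`. -/
def PSO {V : Type} (G : SimpleGraph V) : Subgroup (Out (RAAG G)) :=
  (PSA G).map (QuotientGroup.mk' (Inn (RAAG G)))

/-- The star of a vertex: the vertex together with its neighbours. -/
def graphStar {V : Type} (G : SimpleGraph V) (v : V) : Set V := insert v (G.neighborSet v)

/-- `IsCompOf G s A` says that `A` is the vertex set of a connected component of the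
induced subgraph of `G` on `s`. -/
def IsCompOf {V : Type} (G : SimpleGraph V) (s : Set V) (A : Set V) : Prop :=
  ∃ a : s, A = {x : V | ∃ hx : x ∈ s, (SimpleGraph.induce s G).Reachable ⟨x, hx⟩ a}

/-- The support graph of `G` at a vertex `v`: vertices are the connected components of
`G - st(v)`, and two distinct components `A`, `B` are adjacent if there is `b ∈ B` such
that `A` is also a connected component of `G - st(b)`, or symmetrically. -/
def SupportGraph {V : Type} (G : SimpleGraph V) (v : V) :
    SimpleGraph {A : Set V // IsCompOf G (graphStar G v)ᶜ A} :=
  SimpleGraph.fromRel (fun A B => ∃ b ∈ B.1, IsCompOf G (graphStar G b)ᶜ A.1)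

/-- A pair of distinct non-adjacent vertices `(v, w)` is a separating intersection of links
if `G - (lk(v) ∩ lk(w))` has a connected component containing neither `v` nor `w`. -/
def SILPair {V : Type} (G : SimpleGraph V) (v w : V) : Prop :=
  v ≠ w ∧ ¬ G.Adj v w ∧
    ∃ A : Set V, IsCompOf G (G.neighborSet v ∩ G.neighborSet w)ᶜ A ∧ v ∉ A ∧ w ∉ A
/-- Vertices of the graph `Γ(Λ)`: the vertices of `Λ` (indexed by `Fin n`, with `v i`
denoting `v_{i+1}`) together with new vertices `a₁, a₂, b₁, b₂, c₁, …, c_n, d₁, d₂`. -/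
inductive GV (n : ℕ) : Type where
  | v (i : Fin n)
  | a1 | a2 | b1 | b2
  | c (i : Fin n)
  | d1 | d2
deriving DecidableEq

/-- The edge relation of the graph `Γ(Λ)` (to be symmetrized by `SimpleGraph.fromRel`). -/
def gammaRel {n : ℕ} (Λ : SimpleGraph (Fin n)) : GV n → GV n → Prop
  | .v i, .v j => Λ.Adj i j
  | .c i, .v j => j = i ∨ (j : ℕ) = ((i : ℕ) + 1) % n
  | .c _, .d1 => True
  | .c _, .d2 => True
  | .d1, .v j => (j : ℕ) = 0
  | .d1, .b1 => True
  | .d2, .v j => (j : ℕ) ≠ 0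
  | .d2, .b2 => True
  | .v _, .b1 => True
  | .v _, .b2 => True
  | .b1, .a1 => True
  | .b2, .a2 => True
  | .a1, .a2 => True
  | _, _ => False

/-- The graph `Γ(Λ)` of the explicit construction. -/
def GammaGraph {n : ℕ} (Λ : SimpleGraph (Fin n)) : SimpleGraph (GV n) :=
  SimpleGraph.fromRel (gammaRel Λ)

/-- Vertices of the graph `Γ'(Λ)`: the vertices of `Λ` (indexed by `Fin n`, with `v i`
denoting `v_{i+1}`) together with new vertices
`a₁, a₂, a₃, b₁, b₂, b₃, c₁, …, c_n, d₁, d₂, d₃`. -/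
inductive GV' (n : ℕ) : Type where
  | v (i : Fin n)
  | a1 | a2 | a3 | b1 | b2 | b3
  | c (i : Fin n)
  | d1 | d2 | d3
deriving DecidableEq

/-- The edge relation of the graph `Γ'(Λ)` (to be symmetrized by `SimpleGraph.fromRel`). -/
def gammaRel' {n : ℕ} (Λ : SimpleGraph (Fin n)) : GV' n → GV' n → Prop
  | .v i, .v j => Λ.Adj i j
  | .c i, .v j => j = i ∨ (j : ℕ) = ((i : ℕ) + 1) % n
  | .c _, .d1 => True
  | .c _, .d2 => True
  | .c _, .d3 => True
  | .d1, .v j => (j : ℕ) = 0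
  | .d1, .b1 => True
  | .d2, .v j => (j : ℕ) = 1
  | .d3, .v j => 2 ≤ (j : ℕ)
  | .d3, .b3 => True
  | .d2, .d3 => True
  | .v _, .b1 => True
  | .v _, .b2 => True
  | .v _, .b3 => True
  | .b1, .a1 => True
  | .b2, .a2 => True
  | .b3, .a3 => True
  | .a1, .a2 => True
  | .a1, .a3 => True
  | .a2, .a3 => True
  | _, _ => False

/-- The graph `Γ'(Λ)` of the second explicit construction. -/
def GammaGraph' {n : ℕ} (Λ : SimpleGraph (Fin n)) : SimpleGraph (GV' n) :=
  SimpleGraph.fromRel (gammaRel' Λ)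

lemma gamma_adj_a1 {n : ℕ} {Λ : SimpleGraph (Fin n)} {x : GV n}
    (h : (GammaGraph Λ).Adj GV.a1 x) : x = GV.a2 ∨ x = GV.b1 := by
  obtain ⟨hne, h | h⟩ := h <;> cases x <;> simp_all [gammaRel]

lemma gamma_adj_a2 {n : ℕ} {Λ : SimpleGraph (Fin n)} {x : GV n}
    (h : (GammaGraph Λ).Adj GV.a2 x) : x = GV.a1 ∨ x = GV.b2 := by
  obtain ⟨hne, h | h⟩ := h <;> cases x <;> simp_all [gammaRel]

lemma gamma_adj_v_b1 {n : ℕ} {Λ : SimpleGraph (Fin n)} (k : Fin n) :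
    (GammaGraph Λ).Adj (GV.v k) GV.b1 :=
  ⟨by simp, Or.inl trivial⟩

lemma gamma_adj_v_b2 {n : ℕ} {Λ : SimpleGraph (Fin n)} (k : Fin n) :
    (GammaGraph Λ).Adj (GV.v k) GV.b2 :=
  ⟨by simp, Or.inl trivial⟩

lemma gamma_not_adj_v_a1 {n : ℕ} {Λ : SimpleGraph (Fin n)} (k : Fin n) :
    ¬ (GammaGraph Λ).Adj (GV.v k) GV.a1 := by
  rintro ⟨hne, h | h⟩ <;> simp_all [gammaRel]

lemma gamma_not_adj_v_a2 {n : ℕ} {Λ : SimpleGraph (Fin n)} (k : Fin n) :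
    ¬ (GammaGraph Λ).Adj (GV.v k) GV.a2 := by
  rintro ⟨hne, h | h⟩ <;> simp_all [gammaRel]

/-- If `v_i ≠ v_j` are non-adjacent in `Λ`, then `(v_i, v_j)` is a SIL-pair
in `Γ(Λ)`; in fact `{a₁, a₂}` is the vertex set of a connected component of
`Γ(Λ) - (lk(v_i) ∩ lk(v_j))` containing neither `v_i` nor `v_j`. -/
theorem gammaGraph_silPair
    (n : ℕ) (hn : 3 ≤ n) (Λ : SimpleGraph (Fin n)) (i j : Fin n)
    (hij : i ≠ j) (hadj : ¬ Λ.Adj i j) :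
    SILPair (GammaGraph Λ) (GV.v i) (GV.v j) ∧
    IsCompOf (GammaGraph Λ)
      ((GammaGraph Λ).neighborSet (GV.v i) ∩ (GammaGraph Λ).neighborSet (GV.v j))ᶜ
      {GV.a1, GV.a2} ∧
    GV.v i ∉ ({GV.a1, GV.a2} : Set (GV n)) ∧
    GV.v j ∉ ({GV.a1, GV.a2} : Set (GV n)) := by
  set G := GammaGraph Λ with hG
  set s : Set (GV n) := (G.neighborSet (GV.v i) ∩ G.neighborSet (GV.v j))ᶜ with hs
  have hb1 : GV.b1 ∉ s := by
    simp only [hs, Set.mem_compl_iff, Set.mem_inter_iff, SimpleGraph.mem_neighborSet, not_not]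
    exact ⟨gamma_adj_v_b1 i, gamma_adj_v_b1 j⟩
  have hb2 : GV.b2 ∉ s := by
    simp only [hs, Set.mem_compl_iff, Set.mem_inter_iff, SimpleGraph.mem_neighborSet, not_not]
    exact ⟨gamma_adj_v_b2 i, gamma_adj_v_b2 j⟩
  have ha1 : GV.a1 ∈ s := by
    simp only [hs, Set.mem_compl_iff, Set.mem_inter_iff, SimpleGraph.mem_neighborSet]
    rintro ⟨h1, _⟩
    exact gamma_not_adj_v_a1 i h1
  have ha2 : GV.a2 ∈ s := by
    simp only [hs, Set.mem_compl_iff, Set.mem_inter_iff, SimpleGraph.mem_neighborSet]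
    rintro ⟨h1, _⟩
    exact gamma_not_adj_v_a2 i h1
  -- any vertex of the induced graph adjacent to a1 or a2 is a2 or a1
  have step : ∀ u w : s, (SimpleGraph.induce s G).Adj u w →
      (u.1 = GV.a1 ∨ u.1 = GV.a2) → (w.1 = GV.a1 ∨ w.1 = GV.a2) := by
    rintro ⟨u, hu⟩ ⟨w, hw⟩ hadj' (rfl | rfl)
    · rcases gamma_adj_a1 hadj' with rfl | rfl
      · exact Or.inr rfl
      · exact absurd hw hb1
    · rcases gamma_adj_a2 hadj' with rfl | rfl
      · exact Or.inl rfl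
      · exact absurd hw hb2
  have walkClosed : ∀ (u t : s) (_ : (SimpleGraph.induce s G).Walk u t),
      (u.1 = GV.a1 ∨ u.1 = GV.a2) → (t.1 = GV.a1 ∨ t.1 = GV.a2) := by
    intro u t w
    induction w with
    | nil => exact id
    | cons h _ ih => exact fun hu => ih (step _ _ h hu)
  have hcomp : IsCompOf G s {GV.a1, GV.a2} := by
    refine ⟨⟨GV.a1, ha1⟩, ?_⟩
    ext x
    constructor
    · rintro (rfl | rfl)
      · exact ⟨ha1, SimpleGraph.Reachable.refl _⟩
      · refine ⟨ha2, SimpleGraph.Reachable.symm ?_⟩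
        exact SimpleGraph.Adj.reachable (by exact ⟨by simp, Or.inl trivial⟩)
    · rintro ⟨hx, hr⟩
      obtain ⟨w⟩ := hr.symm
      rcases walkClosed _ _ w (Or.inl rfl) with h | h
      · exact Or.inl h
      · exact Or.inr h
  have hvi : GV.v i ∉ ({GV.a1, GV.a2} : Set (GV n)) := by simp
  have hvj : GV.v j ∉ ({GV.a1, GV.a2} : Set (GV n)) := by simp
  have hnadj : ¬ G.Adj (GV.v i) (GV.v j) := by
    rintro ⟨hne, h | h⟩
    · exact hadj h
    · exact hadj ((Λ.adj_symm h))
  exact ⟨⟨by simp [hij], hnadj, {GV.a1, GV.a2}, hcomp, hvi, hvj⟩, hcomp, hvi, hvj⟩
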